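/- Packing version of the Curtis–Hedlund–Lyndon theorem: let S, T be finite sets, let (P, V) and (Q, W) be tilings of ℤ^d with |P| = m and |Q| = m′ (with fixed enumerations), and let F : S^{ℤ^d} → T^{ℤ^d}. Since (P, V) is a tiling, the packing operator o^{⟨P,V⟩} : S^{ℤ^d} → (S^m)^{ℤ^d} is a bijection. Then the following are equivalent: (i) F is continuous and satisfies F ∘ σ_{M_V·v} = σ_{M_W·v} ∘ F for all v ∈ ℤ^d; (ii) the map G = o^{⟨Q,W⟩} ∘ F ∘ (o^{⟨P,V⟩})^{-1} : (S^m)^{ℤ^d} → (T^{m′})^{ℤ^d} is a cellular transformaton. -/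
import Mathlib


/-- Configurations of a `d`-dimensional cellular automaton over alphabet `S`. -/
abbrev Conf (d : ℕ) (S : Type) : Type := (Fin d → ℤ) → S

/-- The shift by a vector `v ∈ ℤ^d`: `(σ_v c)(w) = c(v + w)`. -/
def shift {d : ℕ} {S : Type} (v : Fin d → ℤ) (c : Conf d S) : Conf d S :=
  fun w => c (v + w)

/-- A cellular transformaton (sliding block code). -/
def IsCellularTransformaton {d : ℕ} {S T : Type} (F : Conf d S → Conf d T) : Prop :=
  ∃ (k : ℕ) (n : Fin k → (Fin d → ℤ)) (f : (Fin k → S) → T),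
    ∀ c v, F c v = f fun i => c (v + n i)

/-- The pair `(p, M)` — an enumerated finite pattern `p : Fin m → ℤ^d` together with the
matrix `M = M_V` whose columns are `d` linearly independent vectors — is a tiling of
`ℤ^d`: every point of `ℤ^d` has a unique representation `p i + M·z`. -/
def IsTilingEnum {d m : ℕ} (p : Fin m → (Fin d → ℤ))
    (M : Matrix (Fin d) (Fin d) ℤ) : Prop :=
  ∀ x : Fin d → ℤ, ∃! q : Fin m × (Fin d → ℤ), x = p q.1 + M.mulVec q.2

/-- The packing operator `o^{⟨P,V⟩} : S^{ℤ^d} → (S^m)^{ℤ^d}` induced by an enumerated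
tiling `(p, M)`: `o(c)(z) = (c(p₁ + M·z), …, c(p_m + M·z))`. -/
def pack {d m : ℕ} {S : Type} (p : Fin m → (Fin d → ℤ))
    (M : Matrix (Fin d) (Fin d) ℤ) (c : Conf d S) : Conf d (Fin m → S) :=
  fun z i => c (p i + M.mulVec z)

/-- **packing version of Curtis–Hedlund–Lyndon.** Let `(P, V)` and
`(Q, W)` be tilings of `ℤ^d` with enumerations `p : Fin m → ℤ^d`, `q : Fin m' → ℤ^d`
and matrices `M_V`, `M_W`.  Since `(P, V)` is a tiling, `o^{⟨P,V⟩}` is a bijection.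
Then `F : S^{ℤ^d} → T^{ℤ^d}` is continuous and satisfies
`F ∘ σ_{M_V·v} = σ_{M_W·v} ∘ F` for all `v ∈ ℤ^d` if and only if
`G = o^{⟨Q,W⟩} ∘ F ∘ (o^{⟨P,V⟩})⁻¹` is a cellular transformaton. -/
-- key window lemma
lemma exists_window {A B : Type} [Finite A] [TopologicalSpace A] [DiscreteTopology A]
    [TopologicalSpace B] [DiscreteTopology B] {ι : Type} (g : (ι → A) → B)
    (hg : Continuous g) :
    ∃ s : Finset ι, ∀ c c' : ι → A, (∀ i ∈ s, c i = c' i) → g c = g c' := by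
  classical
  have key : ∀ c : ι → A, ∃ I : Finset ι, {c' : ι → A | ∀ i ∈ I, c' i = c i} ⊆ g ⁻¹' {g c} := by
    intro c
    have hopen : IsOpen (g ⁻¹' {g c}) := (isOpen_discrete _).preimage hg
    obtain ⟨I, u, h1, h2⟩ := isOpen_pi_iff.mp hopen c (by simp)
    refine ⟨I, fun c' hc' => h2 ?_⟩
    intro i hi
    rw [hc' i hi]
    exact (h1 i hi).2
  choose I hI using key
  let U : (ι → A) → Set (ι → A) := fun c => {c' | ∀ i ∈ I c, c' i = c i}
  have hUopen : ∀ c, IsOpen (U c) := by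
    intro c
    have : U c = Set.pi ↑(I c) (fun i => {c i}) := by
      ext c'; simp [U, Set.mem_pi]
    rw [this]
    exact isOpen_set_pi (I c).finite_toSet (fun i _ => isOpen_discrete _)
  have hcover : (Set.univ : Set (ι → A)) ⊆ ⋃ c, U c := by
    intro c _
    exact Set.mem_iUnion.mpr ⟨c, fun i _ => rfl⟩
  obtain ⟨t, ht⟩ := isCompact_univ.elim_finite_subcover U hUopen hcover
  refine ⟨t.sup I, ?_⟩
  intro c c' hcc'
  obtain ⟨c₀, hc₀t, hc₀⟩ : ∃ c₀ ∈ t, c ∈ U c₀ := by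
    have := ht (Set.mem_univ c)
    simpa using this
  have hc' : c' ∈ U c₀ := by
    intro i hi
    rw [← hcc' i (Finset.mem_sup.mpr ⟨c₀, hc₀t, hi⟩)]
    exact hc₀ i hi
  have e1 : g c = g c₀ := hI c₀ hc₀
  have e2 : g c' = g c₀ := hI c₀ hc'
  rw [e1, e2]

lemma chl_forward {d : ℕ} {A B : Type} [Finite A] [Nonempty A]
    [TopologicalSpace A] [DiscreteTopology A]
    [TopologicalSpace B] [DiscreteTopology B] {H : Conf d A → Conf d B}
    (hc : Continuous H) (hs : ∀ v, H ∘ shift v = shift v ∘ H) :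
    IsCellularTransformaton H := by
  classical
  obtain ⟨s, hs0⟩ := exists_window (fun c => H c 0) ((continuous_apply (0 : Fin d → ℤ)).comp hc)
  let e := s.equivFin
  refine ⟨s.card, fun i => (e.symm i : Fin d → ℤ),
    fun a => H (fun x => if h : x ∈ s then a (e ⟨x, h⟩) else Classical.arbitrary A) 0, ?_⟩
  intro c v
  have h1 : H c v = H (shift v c) 0 := by
    have := congrFun (congrFun (hs v) c) 0
    simp only [Function.comp_apply] at this
    rw [this]; simp [shift]
  rw [h1]
  exact hs0 _ _ (by
    intro x hx
    simp only [dif_pos hx, shift]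
    congr 1
    have : (e.symm (e ⟨x, hx⟩) : Fin d → ℤ) = x := by rw [Equiv.symm_apply_apply]
    rw [this])

lemma cellular_continuous {d : ℕ} {A B : Type} [TopologicalSpace A] [DiscreteTopology A]
    [TopologicalSpace B] {H : Conf d A → Conf d B}
    (h : IsCellularTransformaton H) : Continuous H := by
  obtain ⟨k, n, f, hf⟩ := h
  have hH : H = fun c v => f (fun i => c (v + n i)) := by
    funext c v; exact hf c v
  rw [hH]
  refine continuous_pi fun v => ?_
  have hfc : Continuous f := continuous_of_discreteTopology
  exact hfc.comp (continuous_pi fun i => continuous_apply _)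

lemma cellular_shift {d : ℕ} {A B : Type} {H : Conf d A → Conf d B}
    (h : IsCellularTransformaton H) (v : Fin d → ℤ) :
    H ∘ shift v = shift v ∘ H := by
  obtain ⟨k, n, f, hf⟩ := h
  funext c w
  simp [shift, hf, Function.comp, add_assoc]

noncomputable def unpackAux {d m : ℕ} {S : Type} (p : Fin m → (Fin d → ℤ))
    (M : Matrix (Fin d) (Fin d) ℤ)
    (h : ∀ x : Fin d → ℤ, ∃! q : Fin m × (Fin d → ℤ), x = p q.1 + M.mulVec q.2)
    (c' : Conf d (Fin m → S)) : Conf d S :=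
  fun x => c' (h x).choose.2 (h x).choose.1

lemma unpack_pack {d m : ℕ} {S : Type} (p : Fin m → (Fin d → ℤ))
    (M : Matrix (Fin d) (Fin d) ℤ)
    (h : ∀ x : Fin d → ℤ, ∃! q : Fin m × (Fin d → ℤ), x = p q.1 + M.mulVec q.2)
    (c : Conf d S) : unpackAux p M h (pack p M c) = c := by
  funext x
  show c (p (h x).choose.1 + M.mulVec (h x).choose.2) = c x
  rw [← (h x).choose_spec.1]

lemma pack_unpack {d m : ℕ} {S : Type} (p : Fin m → (Fin d → ℤ))
    (M : Matrix (Fin d) (Fin d) ℤ)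
    (h : ∀ x : Fin d → ℤ, ∃! q : Fin m × (Fin d → ℤ), x = p q.1 + M.mulVec q.2)
    (c' : Conf d (Fin m → S)) : pack p M (unpackAux p M h c') = c' := by
  funext z i
  show unpackAux p M h c' (p i + M.mulVec z) = c' z i
  have huniq : (i, z) = (h (p i + M.mulVec z)).choose :=
    (h (p i + M.mulVec z)).choose_spec.2 (i, z) rfl
  show c' (h (p i + M.mulVec z)).choose.2 (h (p i + M.mulVec z)).choose.1 = c' z i
  rw [← huniq]

lemma pack_shift {d m : ℕ} {S : Type} (p : Fin m → (Fin d → ℤ))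
    (M : Matrix (Fin d) (Fin d) ℤ) (v : Fin d → ℤ) (c : Conf d S) :
    pack p M (shift (M.mulVec v) c) = shift v (pack p M c) := by
  funext z i
  show c (M.mulVec v + (p i + M.mulVec z)) = c (p i + M.mulVec (v + z))
  congr 1
  rw [Matrix.mulVec_add]
  abel

lemma unpack_shift {d m : ℕ} {S : Type} (p : Fin m → (Fin d → ℤ))
    (M : Matrix (Fin d) (Fin d) ℤ)
    (h : ∀ x : Fin d → ℤ, ∃! q : Fin m × (Fin d → ℤ), x = p q.1 + M.mulVec q.2)
    (v : Fin d → ℤ) (c' : Conf d (Fin m → S)) :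
    unpackAux p M h (shift v c') = shift (M.mulVec v) (unpackAux p M h c') := by
  have hinj : Function.Injective (pack (S := S) p M) :=
    Function.LeftInverse.injective (unpack_pack p M h)
  apply hinj
  rw [pack_unpack, pack_shift, pack_unpack]

lemma pack_continuous {d m : ℕ} {S : Type} [TopologicalSpace S]
    (p : Fin m → (Fin d → ℤ)) (M : Matrix (Fin d) (Fin d) ℤ) :
    Continuous (pack (S := S) p M) :=
  continuous_pi fun z => continuous_pi fun i => continuous_apply _

lemma unpack_continuous {d m : ℕ} {S : Type} [TopologicalSpace S]
    (p : Fin m → (Fin d → ℤ)) (M : Matrix (Fin d) (Fin d) ℤ)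
    (h : ∀ x : Fin d → ℤ, ∃! q : Fin m × (Fin d → ℤ), x = p q.1 + M.mulVec q.2) :
    Continuous (unpackAux (S := S) p M h) :=
  continuous_pi fun x => (continuous_apply _).comp (continuous_apply _)

lemma invFun_eq_unpack {d m : ℕ} {S : Type} [Nonempty S]
    (p : Fin m → (Fin d → ℤ)) (M : Matrix (Fin d) (Fin d) ℤ)
    (h : ∀ x : Fin d → ℤ, ∃! q : Fin m × (Fin d → ℤ), x = p q.1 + M.mulVec q.2) :
    Function.invFun (pack (S := S) p M) = unpackAux p M h := by
  funext c'
  have hinj : Function.Injective (pack (S := S) p M) :=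
    Function.LeftInverse.injective (unpack_pack p M h)
  calc Function.invFun (pack (S := S) p M) c'
      = Function.invFun (pack (S := S) p M) (pack p M (unpackAux p M h c')) := by
        rw [pack_unpack]
    _ = unpackAux p M h c' := Function.leftInverse_invFun hinj _

theorem packed_curtis_hedlund_lyndon {d m m' : ℕ} (S T : Type)
    [Finite S] [Nonempty S] [TopologicalSpace S] [DiscreteTopology S]
    [Finite T] [TopologicalSpace T] [DiscreteTopology T]
    (p : Fin m → (Fin d → ℤ)) (MV : Matrix (Fin d) (Fin d) ℤ)
    (hMV : MV.det ≠ 0) (hP : IsTilingEnum p MV)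
    (q : Fin m' → (Fin d → ℤ)) (MW : Matrix (Fin d) (Fin d) ℤ)
    (hMW : MW.det ≠ 0) (hQ : IsTilingEnum q MW)
    (F : Conf d S → Conf d T) :
    (Continuous F ∧
        ∀ v : Fin d → ℤ, F ∘ shift (MV.mulVec v) = shift (MW.mulVec v) ∘ F) ↔
      IsCellularTransformaton
        (pack q MW ∘ F ∘ Function.invFun (pack (S := S) p MV)) := by
  have hup := invFun_eq_unpack (S := S) p MV hP
  rw [hup]
  constructor
  · rintro ⟨hFc, hFs⟩
    apply chl_forward
    · exact (pack_continuous q MW).comp (hFc.comp (unpack_continuous p MV hP))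
    · intro v
      funext c'
      simp only [Function.comp_apply]
      rw [unpack_shift p MV hP v c']
      have h1 := congrFun (hFs v) (unpackAux p MV hP c')
      simp only [Function.comp_apply] at h1
      rw [h1, pack_shift]
  · intro hG'
    have hF : F = unpackAux q MW hQ ∘ (pack q MW ∘ F ∘ unpackAux p MV hP) ∘ pack p MV := by
      funext c
      simp only [Function.comp_apply]
      rw [unpack_pack p MV hP, unpack_pack q MW hQ]
    constructor
    · rw [hF]
      exact (unpack_continuous q MW hQ).comp
        ((cellular_continuous hG').comp (pack_continuous p MV))
    · intro v
      rw [hF]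
      funext c
      simp only [Function.comp_apply]
      rw [pack_shift p MV v c]
      have h2 := congrFun (cellular_shift hG' v) (pack p MV c)
      simp only [Function.comp_apply] at h2
      rw [h2, unpack_shift q MW hQ]
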